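/- Let a_i, b_i > 0 and r_i positive integers, and set c_i = b_1^{r_1·r_2···r_i} · b_2^{r_2···r_i} ··· b_i^{r_i} · a_i. Then for every n, b_1·(a_1 + b_2·(a_2 + ... + b_n·a_n^{1/r_n})^{1/r_2})^{1/r_1} = (c_1 + (c_2 + ... + c_n^{1/r_n})^{1/r_2})^{1/r_1}. -/

import Mathlib

/-- `wrad a b r n i = b i * (a i + b (i+1) * (⋯ + b n * (a n) ^ (1/r n)) ^ (1/r (i+1))) ^ (1/r i)`;
the `n`-th approximant `w n` of the weighted continued radical is `wrad a b r n 1`. -/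
noncomputable def wrad (a b : ℕ → ℝ) (r : ℕ → ℕ) (n : ℕ) : ℕ → ℝ
  | i => if _ : i ≤ n then b i * (a i + wrad a b r n (i + 1)) ^ ((r i : ℝ)⁻¹) else 0
termination_by i => n + 1 - i
decreasing_by omega


/-- `rad a r n i`: the unweighted continued radical. -/
noncomputable def rad (a : ℕ → ℝ) (r : ℕ → ℕ) (n : ℕ) : ℕ → ℝ
  | i => if _ : i ≤ n then (a i + rad a r n (i + 1)) ^ ((r i : ℝ)⁻¹) else 0
termination_by i => n + 1 - i
decreasing_by omega

lemma wrad_nonneg (a b : ℕ → ℝ) (r : ℕ → ℕ)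
    (ha : ∀ n, 1 ≤ n → 0 < a n) (hb : ∀ n, 1 ≤ n → 0 < b n) (n : ℕ) :
    ∀ k i, 1 ≤ i → n + 1 - i ≤ k → 0 ≤ wrad a b r n i := by
  intro k
  induction k with
  | zero =>
    intro i hi h
    rw [wrad]
    simp [show ¬ i ≤ n by omega]
  | succ k ih =>
    intro i hi h
    rw [wrad]
    by_cases hin : i ≤ n
    · simp only [dif_pos hin]
      have h1 : 0 ≤ wrad a b r n (i + 1) := ih (i + 1) (by omega) (by omega)
      have h2 : 0 ≤ a i + wrad a b r n (i + 1) := by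
        have := ha i hi; linarith
      exact mul_nonneg (hb i hi).le (Real.rpow_nonneg h2 _)
    · simp [hin]

lemma key (a b : ℕ → ℝ) (r : ℕ → ℕ)
    (ha : ∀ n, 1 ≤ n → 0 < a n) (hb : ∀ n, 1 ≤ n → 0 < b n)
    (hr : ∀ n, 1 ≤ r n) (n : ℕ) :
    ∀ k i, 1 ≤ i → n + 1 - i ≤ k →
      rad (fun i => (∏ j ∈ Finset.Icc 1 i, b j ^ (∏ k ∈ Finset.Icc j i, r k)) * a i) r n i
        = (∏ j ∈ Finset.Icc 1 (i - 1), b j ^ (∏ k ∈ Finset.Icc j (i - 1), r k))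
            * wrad a b r n i := by
  intro k
  induction k with
  | zero =>
    intro i hi h
    rw [rad, wrad]
    simp [show ¬ i ≤ n by omega]
  | succ k ih =>
    intro i hi h
    rw [rad, wrad]
    by_cases hin : i ≤ n
    · simp only [dif_pos hin]
      rw [ih (i + 1) (by omega) (by omega)]
      have hi1 : i + 1 - 1 = i := by omega
      rw [hi1]
      set B : ℕ → ℝ := fun m => ∏ j ∈ Finset.Icc 1 m, b j ^ (∏ k ∈ Finset.Icc j m, r k)
        with hB
      have hBpos : ∀ m, 0 < B m := fun m =>
        Finset.prod_pos fun j hj => pow_pos (hb j (Finset.mem_Icc.mp hj).1) _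
      have hw : 0 ≤ wrad a b r n (i + 1) :=
        wrad_nonneg a b r ha hb n (n + 1 - (i + 1)) (i + 1) (by omega) le_rfl
      have hsum : 0 ≤ a i + wrad a b r n (i + 1) := by
        have := ha i hi; linarith
      -- B i = (B (i-1) * b i) ^ r i
      have hstep : B i = (B (i - 1) * b i) ^ r i := by
        rw [hB]
        simp only
        rw [mul_pow, ← Finset.prod_pow]
        have hii : i - 1 + 1 = i := by omega
        rw [show Finset.Icc 1 i = insert i (Finset.Icc 1 (i-1)) by
              ext x; simp [Finset.mem_Icc, Finset.mem_insert]; omega]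
        rw [Finset.prod_insert (by simp; omega)]
        rw [show (∏ k ∈ Finset.Icc i i, r k) = r i by simp]
        rw [mul_comm]
        congr 1
        apply Finset.prod_congr rfl
        intro j hj
        have hj' := Finset.mem_Icc.mp hj
        rw [← pow_mul]
        congr 1
        rw [show Finset.Icc j i = insert i (Finset.Icc j (i-1)) by
              ext x; simp [Finset.mem_Icc, Finset.mem_insert]; omega]
        rw [Finset.prod_insert (by simp; omega)]
        ring
      have : B i * a i + B i * wrad a b r n (i + 1)
          = B i * (a i + wrad a b r n (i + 1)) := by ring
      rw [this, Real.mul_rpow (hBpos i).le hsum, hstep,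
        ← Real.rpow_natCast ((B (i-1) * b i)) (r i),
        ← Real.rpow_mul (mul_pos (hBpos (i-1)) (hb i hi)).le]
      have hrne : (r i : ℝ) ≠ 0 := by
        have := hr i; positivity
      rw [mul_inv_cancel₀ hrne, Real.rpow_one]
      ring
    · simp [hin]

theorem weighted_to_unweighted (a b : ℕ → ℝ) (r : ℕ → ℕ)
    (ha : ∀ n, 1 ≤ n → 0 < a n) (hb : ∀ n, 1 ≤ n → 0 < b n)
    (hr : ∀ n, 1 ≤ r n) :
    ∀ n : ℕ,
      wrad a b r n 1 =
        rad (fun i => (∏ j ∈ Finset.Icc 1 i, b j ^ (∏ k ∈ Finset.Icc j i, r k)) * a i)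
          r n 1 := by
  intro n
  rw [key a b r ha hb hr n n 1 le_rfl (by omega)]
  simp
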